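/- Let P, Q be regular ω-posets and φ : SP → SQ a continuous map. Then the relation ⊐_φ (defined by q ⊐_φ p iff q_S ⊇ φ[p̄_S]) is the unique strong refiner ⊐ with S_⊐ = φ, where a strong refiner is a ∧-preserving refiner satisfying ⊐ = ▷ * ⊐. -/
import Mathlib


namespace OP

section OmegaPoset

variable (P : Type*) [PartialOrder P]

/-- The n-th cone of the poset: `cone 0` is the set of maximal elements. -/
def cone : ℕ → Set P
  | 0 => {p | ∀ q, ¬ p < q}
  | n + 1 => {p | ∀ q, p < q → q ∈ cone n}

/-- The n-th level: atoms (minimal elements) of the n-th cone. -/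
def level (n : ℕ) : Set P := {p | p ∈ cone P n ∧ ∀ q, q < p → q ∉ cone P n}

/-- An ω-poset: all levels finite and every element in some cone. -/
def IsOmegaPoset : Prop := (∀ n, (level P n).Finite) ∧ ∀ p : P, ∃ n, p ∈ cone P n

variable {P}

/-- `refines A C` : every element of `A` lies below some element of `C` (`A ≤ C`). -/
def refines (A C : Set P) : Prop := ∀ a ∈ A, ∃ c ∈ C, a ≤ c

/-- A cap is a subset refined by some level. -/
def IsCap (C : Set P) : Prop := ∃ n, refines (level P n) C

/-- A selector meets every cap. -/
def IsSelector (S : Set P) : Prop := ∀ C : Set P, IsCap C → (S ∩ C).Nonempty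

/-- `wedge p q` : `p` and `q` have a common lower bound. -/
def wedge (p q : P) : Prop := ∃ r, r ≤ p ∧ r ≤ q

def wedgeSet (p : P) : Set P := {q | wedge p q}

/-- The adjacency relation `p ⌅ q`. -/
def barwedge (p q : P) : Prop := ∀ C : Set P, IsCap C → ∃ c ∈ C, wedge p c ∧ wedge c q

/-- `p ⊲_C q`. -/
def starBelowOn (C : Set P) (p q : P) : Prop := ∀ c ∈ C, wedge p c → c ≤ q

/-- The star-below relation `p ⊲ q`. -/
def starBelow (p q : P) : Prop := ∃ n, starBelowOn (level P n) p q

/-- A clique: pairwise adjacent set. -/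
def IsClique (X : Set P) : Prop := ∀ p ∈ X, ∀ q ∈ X, barwedge p q

/-- Unbounded subset: meets `C^≥` for every cap `C`. -/
def IsUnbounded (X : Set P) : Prop := ∀ C : Set P, IsCap C → ∃ u ∈ X, ∃ c ∈ C, u ≤ c

variable (P)

/-- Regularity: every level is eventually star-refined by a later level. -/
def IsRegular : Prop :=
  ∀ m, ∃ n, m < n ∧ ∀ p ∈ level P n, ∃ q ∈ level P m, starBelow p q

/-- The spectrum: minimal selectors. -/
def Spec : Set (Set P) := {S | IsSelector S ∧ ∀ T ⊆ S, IsSelector T → T = S}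

def SpecT : Type _ := {S : Set P // S ∈ Spec P}

instance : TopologicalSpace (SpecT P) :=
  TopologicalSpace.generateFrom {U | ∃ p : P, U = {S : SpecT P | p ∈ S.1}}

/-- The clique-spectrum: unbounded maximal cliques. -/
def CliqueSpec : Set (Set P) :=
  {X | IsUnbounded X ∧ IsClique X ∧ ∀ Y : Set P, IsClique Y → X ⊆ Y → Y = X}

def CliqueSpecT : Type _ := {X : Set P // X ∈ CliqueSpec P}

instance : TopologicalSpace (CliqueSpecT P) :=
  TopologicalSpace.generateFrom {U | ∃ p : P, U = {X : CliqueSpecT P | p ∉ X.1}}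

variable {P}

/-- The basic open set `p_S`. -/
def pSOpen (p : P) : Set (SpecT P) := {S | p ∈ S.1}

/-- The closed set `p̄_S = {S : S ⊆ p^∧}`. -/
def pSBar (p : P) : Set (SpecT P) := {S | S.1 ⊆ wedgeSet p}

/-- Prime ω-poset: every basic open set is nonempty. -/
def IsPrimePoset (P : Type*) [PartialOrder P] : Prop := ∀ p : P, (pSOpen p).Nonempty

end OmegaPoset

end OP

namespace OP

section Refiners

variable {P Q : Type*} [PartialOrder P] [PartialOrder Q]

/-- A refiner: every cap of `Q` is refined through the relation by some cap of `P`. -/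
def IsRefinerRel (R : Q → P → Prop) : Prop :=
  ∀ C : Set Q, IsCap C → ∃ B : Set P, IsCap B ∧ ∀ b ∈ B, ∃ c ∈ C, R c b

/-- `∧`-preserving: `⊐ ∘ ∧ ∘ ⊏ ⊆ ∧`. -/
def WedgePres (R : Q → P → Prop) : Prop :=
  ∀ q p p' q', R q p → wedge p p' → R q' p' → wedge q q'

/-- `⌅`-preserving: `⊐ ∘ ⌅ ∘ ⊏ ⊆ ⌅`. -/
def BarwedgePres (R : Q → P → Prop) : Prop :=
  ∀ q p p' q', R q p → barwedge p p' → R q' p' → barwedge q q'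

/-- The star `⊐*` of a relation: `q ⊐* p` iff some cap `C` has `C ∩ p^∧ ⊏ q`. -/
def relStar (R : Q → P → Prop) (q : Q) (p : P) : Prop :=
  ∃ C : Set P, IsCap C ∧ ∀ c ∈ C, wedge p c → R q c

/-- Composition `▷ ∘ ⊐` with the star-above relation on `Q`. -/
def starAboveComp (R : Q → P → Prop) : Q → P → Prop :=
  fun q p => ∃ q', starBelow q' q ∧ R q' p

/-- A strong refiner: a `∧`-preserving refiner with `⊐ = ▷ * ⊐`. -/
def IsStrongRefiner (R : Q → P → Prop) : Prop :=
  IsRefinerRel R ∧ WedgePres R ∧ ∀ q p, R q p ↔ relStar (starAboveComp R) q p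

/-- `φ` is the continuous map associated to `R`, i.e. `φ(S) = S^{⊏ ⊲}`. -/
def specMapOf (R : Q → P → Prop) (φ : SpecT P → SpecT Q) : Prop :=
  ∀ S : SpecT P, (φ S).1 = {r : Q | ∃ p ∈ S.1, ∃ q, R q p ∧ starBelow q r}

/-- The relation `⊒_φ`: `q ⊒_φ p` iff `q̄_S ⊇ φ[p̄_S]`. -/
def relBarPhi (φ : SpecT P → SpecT Q) (q : Q) (p : P) : Prop :=
  ∀ S : SpecT P, S ∈ pSBar p → φ S ∈ pSBar q

/-- The relation `⊐_φ`: `q ⊐_φ p` iff `q_S ⊇ φ[p̄_S]`. -/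
def relPhi (φ : SpecT P → SpecT Q) (q : Q) (p : P) : Prop :=
  ∀ S : SpecT P, S ∈ pSBar p → φ S ∈ pSOpen q

/-- An arrow: a finite relation with `← ∘ ⌅` co-surjective. -/
def IsArrow (A : Q → P → Prop) : Prop :=
  {x : Q × P | A x.1 x.2}.Finite ∧ ∀ p : P, ∃ q p', A q p' ∧ barwedge p' p

/-- `A ≤ B` for relations: `A ⊆ ≤ ∘ B ∘ ≥`. -/
def arrowLe (A B : Q → P → Prop) : Prop :=
  ∀ q p, A q p → ∃ q' p', q ≤ q' ∧ p ≤ p' ∧ B q' p'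

/-- The relation `⟨←` of an arrow: `q ⟨← p` iff `p^{⌅→} ⊲ q`. -/
def angleRel (A : Q → P → Prop) (q : Q) (p : P) : Prop :=
  ∀ q', (∃ p', barwedge p p' ∧ A q' p') → starBelow q' q

/-- The relation `⋂ₙ (←ₙ)̄_S` on spectra determined by a sequence of arrows. -/
def seqGraph (A : ℕ → Q → P → Prop) (T : SpecT Q) (S : SpecT P) : Prop :=
  ∀ n, ∃ q p, A n q p ∧ T.1 ⊆ wedgeSet q ∧ S.1 ⊆ wedgeSet p

end Refiners

end OP

namespace OPAux
open OP

section Basic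

variable {P : Type*} [PartialOrder P]

lemma mem_cone_zero {p : P} : p ∈ cone P 0 ↔ ∀ q, ¬ p < q := Iff.rfl

lemma mem_cone_succ {p : P} {n : ℕ} : p ∈ cone P (n + 1) ↔ ∀ q, p < q → q ∈ cone P n :=
  Iff.rfl

lemma cone_succ_mono (n : ℕ) : cone P n ⊆ cone P (n + 1) := by
  induction n with
  | zero => intro p hp q hq; exact absurd hq (hp q)
  | succ n ih => intro p hp q hq; exact ih (hp q hq)

lemma cone_mono {m n : ℕ} (h : m ≤ n) : cone P m ⊆ cone P n := by
  induction h with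
  | refl => exact subset_rfl
  | step h ih => exact ih.trans (cone_succ_mono _)

lemma exists_level_le {n : ℕ} {p : P} (hp : p ∈ cone P n) :
    ∃ q, q ∈ level P n ∧ q ≤ p := by
  induction n generalizing p with
  | zero => exact ⟨p, ⟨hp, fun q hq hq0 => hq0 p hq⟩, le_rfl⟩
  | succ n ih =>
    by_cases hmin : ∀ r, r < p → r ∉ cone P (n + 1)
    · exact ⟨p, ⟨hp, hmin⟩, le_rfl⟩
    · push_neg at hmin
      obtain ⟨r, hrp, hr⟩ := hmin
      have hpn : p ∈ cone P n := hr p hrp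
      obtain ⟨q, ⟨hq, hqmin⟩, hqp⟩ := ih hpn
      by_cases h2 : ∀ s, s < q → s ∉ cone P (n + 1)
      · exact ⟨q, ⟨cone_succ_mono n hq, h2⟩, hqp⟩
      · push_neg at h2
        obtain ⟨s, hsq, hs⟩ := h2
        refine ⟨s, ⟨hs, fun t htl hts => ?_⟩, (hsq.le.trans hqp)⟩
        exact hqmin s hsq (hts s htl)

lemma refines_refl (A : Set P) : refines A A := fun a ha => ⟨a, ha, le_rfl⟩

lemma refines_trans {A B C : Set P} (h1 : refines A B) (h2 : refines B C) :
    refines A C := by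
  intro a ha
  obtain ⟨b, hb, hab⟩ := h1 a ha
  obtain ⟨c, hc, hbc⟩ := h2 b hb
  exact ⟨c, hc, hab.trans hbc⟩

lemma level_refines_succ (n : ℕ) : refines (level P (n + 1)) (level P n) := by
  rintro p ⟨hp, hpmin⟩
  by_cases hc : p ∈ cone P n
  · exact ⟨p, ⟨hc, fun r hr hrc => hpmin r hr (cone_succ_mono n hrc)⟩, le_rfl⟩
  · cases n with
    | zero =>
      rw [mem_cone_zero] at hc; push_neg at hc
      obtain ⟨q, hq⟩ := hc
      have hq0 : q ∈ cone P 0 := hp q hq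
      exact ⟨q, ⟨hq0, fun r hr hrc => hrc q hr⟩, hq.le⟩
    | succ m =>
      rw [mem_cone_succ] at hc; push_neg at hc
      obtain ⟨q, hq, hqm⟩ := hc
      have hq1 : q ∈ cone P (m + 1) := hp q hq
      refine ⟨q, ⟨hq1, fun r hr hrc => hqm (hrc q hr)⟩, hq.le⟩

lemma level_refines_of_le {m n : ℕ} (h : m ≤ n) :
    refines (level P n) (level P m) := by
  induction h with
  | refl => exact refines_refl _
  | step h ih => exact refines_trans (level_refines_succ _) ih

lemma cap_lift {C : Set P} {m n : ℕ} (h : refines (level P m) C) (hmn : m ≤ n) :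
    refines (level P n) C :=
  refines_trans (level_refines_of_le hmn) h

lemma isCap_level (n : ℕ) : IsCap (level P n) := ⟨n, refines_refl _⟩

lemma wedge_symm {p q : P} (h : wedge p q) : wedge q p := by
  obtain ⟨r, h1, h2⟩ := h; exact ⟨r, h2, h1⟩

end Basic

section Selectors

variable {P : Type*} [PartialOrder P]

lemma isSelector_up {W : Set P}
    (h : ∀ n, ∃ m, n ≤ m ∧ ∃ z, z ∈ level P m ∧ z ∈ W) :
    IsSelector {x : P | ∃ z ∈ W, z ≤ x} := by
  rintro C ⟨m₀, href⟩
  obtain ⟨m, hm, z, hzl, hzW⟩ := h m₀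
  obtain ⟨c, hcC, hzc⟩ := cap_lift href hm z hzl
  exact ⟨c, ⟨z, hzW, hzc⟩, hcC⟩

lemma exists_finite_subcap (hfin : ∀ n, (level P n).Finite) {C : Set P}
    (hC : IsCap C) : ∃ C₀ ⊆ C, C₀.Finite ∧ IsCap C₀ := by
  obtain ⟨m, href⟩ := hC
  classical
  choose! f hfC hle using href
  refine ⟨f '' (level P m), ?_, (hfin m).image f, ⟨m, fun a ha => ?_⟩⟩
  · rintro c ⟨a, ha, rfl⟩; exact hfC a ha
  · exact ⟨f a, Set.mem_image_of_mem f ha, hle a ha⟩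

lemma exists_minSelector (hfin : ∀ n, (level P n).Finite) {S₀ : Set P}
    (hS₀ : IsSelector S₀) : ∃ T, T ∈ Spec P ∧ T ⊆ S₀ := by
  classical
  set Fam : Set (Set P) := {T | IsSelector T ∧ T ⊆ S₀} with hFam
  have H : ∀ c ⊆ Fam, IsChain (· ⊆ ·) c → c.Nonempty →
      ∃ lb ∈ Fam, ∀ s ∈ c, lb ⊆ s := by
    intro c hcFam hchain hcne
    refine ⟨⋂₀ c, ⟨?_, ?_⟩, fun s hs => Set.sInter_subset_of_mem hs⟩
    · intro C hC
      obtain ⟨C₀, hsub, hfinC₀, hcapC₀⟩ := exists_finite_subcap hfin hC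
      obtain ⟨v, hvmem, hminim⟩ :=
        Nat.lt_wfRel.wf.has_min ((fun T => (T ∩ C₀).ncard) '' c) (hcne.image _)
      obtain ⟨T₀, hT₀c, hv⟩ := hvmem
      have hv' : (T₀ ∩ C₀).ncard = v := hv
      have hmin : ∀ T ∈ c, (T₀ ∩ C₀).ncard ≤ (T ∩ C₀).ncard := by
        intro T hT
        have h2 : ¬ (T ∩ C₀).ncard < v := hminim _ ⟨T, hT, rfl⟩
        omega
      have hkey : ∀ T ∈ c, T₀ ∩ C₀ ⊆ T := by
        intro T hT
        rcases eq_or_ne T T₀ with rfl | hne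
        · exact Set.inter_subset_left
        · rcases hchain hT hT₀c hne with h | h
          · have heq : T ∩ C₀ = T₀ ∩ C₀ :=
              Set.eq_of_subset_of_ncard_le
                (Set.inter_subset_inter_left _ h) (hmin T hT)
                (hfinC₀.subset Set.inter_subset_right)
            rw [← heq]; exact Set.inter_subset_left
          · exact (Set.inter_subset_inter_left C₀ h).trans Set.inter_subset_left
      obtain ⟨x, hxT₀, hxC₀⟩ := (hcFam hT₀c).1 C₀ hcapC₀
      exact ⟨x, Set.mem_sInter.2 fun T hT => hkey T hT ⟨hxT₀, hxC₀⟩, hsub hxC₀⟩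
    · obtain ⟨T, hT⟩ := hcne
      exact (Set.sInter_subset_of_mem hT).trans (hcFam hT).2
  obtain ⟨T, hTS₀, hmini⟩ := zorn_superset_nonempty Fam H S₀ ⟨hS₀, subset_rfl⟩
  refine ⟨T, ⟨hmini.1.1, fun T' hsub' hsel' => ?_⟩, hmini.1.2⟩
  exact subset_antisymm hsub' (hmini.2 ⟨hsel', hsub'.trans hmini.1.2⟩ hsub')

lemma exists_spec_up (hfin : ∀ n, (level P n).Finite) {W : Set P}
    (h : ∀ n, ∃ z, z ∈ level P n ∧ z ∈ W) :
    ∃ T, T ∈ Spec P ∧ T ⊆ {x : P | ∃ z ∈ W, z ≤ x} :=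
  exists_minSelector hfin (isSelector_up fun n => ⟨n, le_rfl, h n⟩)

end Selectors

section SpecLemmas

variable {P : Type*} [PartialOrder P]

lemma spec_isSelector {S : Set P} (hS : S ∈ Spec P) : IsSelector S := hS.1

lemma spec_min {S : Set P} (hS : S ∈ Spec P) {p : P} (hp : p ∈ S) :
    ∃ C, IsCap C ∧ S ∩ C = {p} := by
  have hnot : ¬ IsSelector (S \ {p}) := by
    intro h
    have heq := hS.2 _ Set.diff_subset h
    have : p ∈ S \ {p} := heq.symm ▸ hp
    exact this.2 rfl
  unfold IsSelector at hnot
  push_neg at hnot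
  obtain ⟨C, hC, hemp⟩ := hnot
  have hsub : S ∩ C ⊆ {p} := by
    intro x ⟨hxS, hxC⟩
    by_contra hne
    have : x ∈ (S \ {p}) ∩ C := ⟨⟨hxS, hne⟩, hxC⟩
    rw [hemp] at this; exact this
  obtain ⟨y, hy⟩ := hS.1 C hC
  have hyp : y = p := hsub hy
  refine ⟨C, hC, subset_antisymm hsub ?_⟩
  rintro x rfl; exact hyp ▸ hy

lemma spec_cap_wedge {S : Set P} (hS : S ∈ Spec P) {u : P} (hu : u ∈ S)
    {C : Set P} (hC : IsCap C) : ∃ y, y ∈ S ∩ C ∧ wedge y u := by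
  obtain ⟨Cu, hCu, htr⟩ := spec_min hS hu
  obtain ⟨m₁, href₁⟩ := hCu
  obtain ⟨m₂, href₂⟩ := hC
  have r₁ : refines (level P (max m₁ m₂)) Cu := cap_lift href₁ (le_max_left _ _)
  have r₂ : refines (level P (max m₁ m₂)) C := cap_lift href₂ (le_max_right _ _)
  set k := max m₁ m₂
  set Y : Set P := (Cu \ {u}) ∪
    {c | c ∈ C ∧ ∃ x, x ∈ level P k ∧ (∀ e ∈ Cu, x ≤ e → e = u) ∧ x ≤ c} with hY
  have capY : IsCap Y := by
    refine ⟨k, fun a ha => ?_⟩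
    by_cases hb : ∀ e ∈ Cu, a ≤ e → e = u
    · obtain ⟨c, hcC, hac⟩ := r₂ a ha
      exact ⟨c, Or.inr ⟨hcC, a, ha, hb, hac⟩, hac⟩
    · push_neg at hb
      obtain ⟨e, heCu, hae, hne⟩ := hb
      exact ⟨e, Or.inl ⟨heCu, hne⟩, hae⟩
  obtain ⟨y, hyS, hyY⟩ := hS.1 Y capY
  rcases hyY with h | ⟨hyC, x, hxl, hxprop, hxy⟩
  · exfalso
    have : y ∈ S ∩ Cu := ⟨hyS, h.1⟩
    rw [htr] at this
    exact h.2 this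
  · obtain ⟨e, heCu, hxe⟩ := r₁ x hxl
    have heu : e = u := hxprop e heCu hxe
    exact ⟨y, ⟨hyS, hyC⟩, x, hxy, heu ▸ hxe⟩

lemma spec_wedge {S : Set P} (hS : S ∈ Spec P) {u s : P} (hu : u ∈ S)
    (hs : s ∈ S) : wedge u s := by
  have hsel : IsSelector (S ∩ {t | wedge t u}) := by
    intro C hC
    obtain ⟨y, ⟨hyS, hyC⟩, hw⟩ := spec_cap_wedge hS hu hC
    exact ⟨y, ⟨hyS, hw⟩, hyC⟩
  have heq := hS.2 _ Set.inter_subset_left hsel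
  have : s ∈ S ∩ {t | wedge t u} := heq.symm ▸ hs
  exact wedge_symm this.2

lemma spec_up_star {S : Set P} (hS : S ∈ Spec P) {q r : P} (hq : q ∈ S)
    (h : starBelow q r) : r ∈ S := by
  obtain ⟨k, hk⟩ := h
  set Y : Set P := {r} ∪ {x | x ∈ level P k ∧ ¬ wedge q x} with hY
  have capY : IsCap Y := by
    refine ⟨k, fun a ha => ?_⟩
    by_cases hw : wedge q a
    · exact ⟨r, Or.inl rfl, hk a ha hw⟩
    · exact ⟨a, Or.inr ⟨ha, hw⟩, le_rfl⟩
  obtain ⟨y, hyS, hyY⟩ := hS.1 Y capY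
  rcases hyY with rfl | ⟨_, hnw⟩
  · exact hyS
  · exact absurd (spec_wedge hS hq hyS) hnw

lemma spec_up_le {S : Set P} (hS : S ∈ Spec P) {b e : P} (hb : b ∈ S)
    (hbe : b ≤ e) : e ∈ S := by
  obtain ⟨Cb, hCb, htr⟩ := spec_min hS hb
  obtain ⟨j, href⟩ := hCb
  set Y : Set P := (Cb \ {b}) ∪ {e} with hY
  have capY : IsCap Y := by
    refine ⟨j, fun a ha => ?_⟩
    obtain ⟨c, hc, hac⟩ := href a ha
    rcases eq_or_ne c b with rfl | hne
    · exact ⟨e, Or.inr rfl, hac.trans hbe⟩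
    · exact ⟨c, Or.inl ⟨hc, hne⟩, hac⟩
  obtain ⟨y, hyS, hyY⟩ := hS.1 Y capY
  rcases hyY with h | rfl
  · exfalso
    have : y ∈ S ∩ Cb := ⟨hyS, h.1⟩
    rw [htr] at this
    exact h.2 this
  · exact hyS

lemma starBelow_le {q r r' : P} (h : starBelow q r) (hrr' : r ≤ r') :
    starBelow q r' := by
  obtain ⟨k, hk⟩ := h
  exact ⟨k, fun c hc hw => (hk c hc hw).trans hrr'⟩

lemma spec_dir (hreg : IsRegular P) {S : Set P} (hS : S ∈ Spec P)
    (F : Finset P) (hF : ∀ f ∈ F, f ∈ S) :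
    ∃ p ∈ S, ∀ f ∈ F, starBelow p f := by
  classical
  have h1 : ∀ f ∈ F, ∃ C, IsCap C ∧ S ∩ C = {f} := fun f hf => spec_min hS (hF f hf)
  choose C hcap htr using h1
  choose m hm using hcap
  set M := F.attach.sup (fun x => m x.1 x.2) with hM
  obtain ⟨n, hMn, hstar⟩ := hreg M
  obtain ⟨p, hpS, hpl⟩ := hS.1 (level P n) (isCap_level n)
  obtain ⟨b, hbl, hpb⟩ := hstar p hpl
  have hbS : b ∈ S := spec_up_star hS hpS hpb
  refine ⟨p, hpS, fun f hf => ?_⟩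
  have hle : m f hf ≤ M := Finset.le_sup (f := fun x => m x.1 x.2) (F.mem_attach ⟨f, hf⟩)
  obtain ⟨e, heC, hbe⟩ := cap_lift (hm f hf) hle b hbl
  have heS : e ∈ S := spec_up_le hS hbS hbe
  have hef : e = f := by
    have : e ∈ S ∩ C f hf := ⟨heS, heC⟩
    rw [htr f hf] at this
    exact this
  exact starBelow_le hpb (hef ▸ hbe)

end SpecLemmas

section Continuity

variable {P Q : Type*} [PartialOrder P] [PartialOrder Q]

lemma isOpen_pSOpen (q : Q) : IsOpen (pSOpen q) :=
  TopologicalSpace.GenerateOpen.basic _ ⟨q, rfl⟩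

lemma open_finset {U : Set (SpecT P)} (hU : IsOpen U) {S : SpecT P} (hS : S ∈ U) :
    ∃ F : Finset P, (∀ f ∈ F, f ∈ S.1) ∧
      ∀ S' : SpecT P, (∀ f ∈ F, f ∈ S'.1) → S' ∈ U := by
  classical
  have hU' : TopologicalSpace.GenerateOpen
      {U | ∃ p : P, U = {S : SpecT P | p ∈ S.1}} U := hU
  clear hU
  induction hU' with
  | basic V hV =>
    obtain ⟨p, rfl⟩ := hV
    exact ⟨{p}, by simpa using hS, fun S' h => h p (Finset.mem_singleton_self p)⟩
  | univ => exact ⟨∅, by simp, fun _ _ => Set.mem_univ _⟩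
  | inter U V hUg hVg ihU ihV =>
    obtain ⟨F₁, h₁, h₁'⟩ := ihU hS.1
    obtain ⟨F₂, h₂, h₂'⟩ := ihV hS.2
    refine ⟨F₁ ∪ F₂, ?_, fun S' h =>
      ⟨h₁' S' (fun f hf => h f (Finset.mem_union_left _ hf)),
       h₂' S' (fun f hf => h f (Finset.mem_union_right _ hf))⟩⟩
    intro f hf
    rcases Finset.mem_union.1 hf with h | h
    · exact h₁ f h
    · exact h₂ f h
  | sUnion 𝒯 hg ih =>
    obtain ⟨t, ht, hSt⟩ := hS
    obtain ⟨F, h1, h2⟩ := ih t ht hSt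
    exact ⟨F, h1, fun S' hS' => ⟨t, ht, h2 S' hS'⟩⟩

lemma relPhi_mono {φ : SpecT P → SpecT Q} {q : Q} {p p' : P}
    (h : relPhi φ q p) (hle : p' ≤ p) : relPhi φ q p' := by
  intro S hS
  refine h S fun x hx => ?_
  obtain ⟨w, h1, h2⟩ := hS hx
  exact ⟨w, h1.trans hle, h2⟩

lemma exists_relPhi (hregP : IsRegular P) {φ : SpecT P → SpecT Q}
    (hφ : Continuous φ) (S : SpecT P) {q : Q} (hq : q ∈ (φ S).1) :
    ∃ p ∈ S.1, relPhi φ q p := by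
  have hopen : IsOpen (φ ⁻¹' (pSOpen q)) := (isOpen_pSOpen q).preimage hφ
  have hSU : S ∈ φ ⁻¹' (pSOpen q) := hq
  obtain ⟨F, hF, hprop⟩ := open_finset hopen hSU
  obtain ⟨p, hpS, hstar⟩ := spec_dir hregP S.2 F hF
  refine ⟨p, hpS, fun S' hS' => ?_⟩
  apply hprop
  intro f hf
  obtain ⟨k, hk⟩ := hstar f hf
  obtain ⟨x, hxS', hxl⟩ := S'.2.1 (level P k) (isCap_level k)
  exact spec_up_le S'.2 hxS' (hk x hxl (hS' hxS'))

end Continuity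

end OPAux

open OPAux

open OP in
/-- `⊐_φ` is the unique strong refiner inducing a given continuous map `φ`. -/
theorem stmt9 {P Q : Type*} [PartialOrder P] [PartialOrder Q]
    (hP : IsOmegaPoset P) (hregP : IsRegular P) (hQ : IsOmegaPoset Q) (hregQ : IsRegular Q)
    (φ : SpecT P → SpecT Q) (hφ : Continuous φ) :
    IsStrongRefiner (relPhi φ) ∧ specMapOf (relPhi φ) φ ∧
      ∀ R : Q → P → Prop, IsStrongRefiner R → specMapOf R φ → R = relPhi φ := by
  classical
  refine ⟨⟨?_, ?_, ?_⟩, ?_, ?_⟩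
  · -- IsRefinerRel (relPhi φ)
    intro C hC
    refine ⟨{b | ∃ c ∈ C, relPhi φ c b}, ?_, fun b hb => hb⟩
    by_contra hnc
    have hbad : ∀ n, ∃ z, z ∈ level P n ∧ ¬ ∃ c ∈ C, relPhi φ c z := by
      intro n
      by_contra h'
      push_neg at h'
      exact hnc ⟨n, fun a ha => ⟨a, h' a ha, le_rfl⟩⟩
    obtain ⟨T, hT, hsub⟩ :=
      exists_spec_up (W := {z : P | ¬ ∃ c ∈ C, relPhi φ c z}) hP.1 hbad
    set ST : SpecT P := ⟨T, hT⟩ with hST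
    obtain ⟨c, hcφ, hcC⟩ := (φ ST).2.1 C hC
    obtain ⟨p, hpT, hrel⟩ := exists_relPhi hregP hφ ST hcφ
    obtain ⟨z, hzW, hzp⟩ := hsub hpT
    exact hzW ⟨c, hcC, relPhi_mono hrel hzp⟩
  · -- WedgePres (relPhi φ)
    intro q p p' q' hqp hw hq'p'
    obtain ⟨r, hrp, hrp'⟩ := hw
    obtain ⟨N, hN⟩ := hP.2 r
    have hsel : IsSelector {x : P | ∃ z ∈ {z : P | z ≤ r}, z ≤ x} := by
      apply isSelector_up
      intro n
      refine ⟨max n N, le_max_left _ _, ?_⟩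
      obtain ⟨z, hz, hzr⟩ := exists_level_le (cone_mono (le_max_right n N) hN)
      exact ⟨z, hz, hzr⟩
    obtain ⟨T, hT, hsub⟩ := exists_minSelector hP.1 hsel
    set ST : SpecT P := ⟨T, hT⟩ with hST
    have h1 : ST ∈ pSBar p := by
      intro x hx
      obtain ⟨z, hzr, hzx⟩ := hsub hx
      exact ⟨z, le_trans hzr hrp, hzx⟩
    have h2 : ST ∈ pSBar p' := by
      intro x hx
      obtain ⟨z, hzr, hzx⟩ := hsub hx
      exact ⟨z, le_trans hzr hrp', hzx⟩
    exact spec_wedge (φ ST).2 (hqp ST h1) (hq'p' ST h2)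
  · -- star condition
    intro q p
    constructor
    · -- relPhi → relStar (starAboveComp (relPhi φ))
      intro h
      have hcap : IsCap {c : P | wedge p c → ∃ q', starBelow q' q ∧ relPhi φ q' c} := by
        by_contra hnc
        have hbad : ∀ n, ∃ z, z ∈ level P n ∧
            (wedge p z ∧ ¬ ∃ q', starBelow q' q ∧ relPhi φ q' z) := by
          intro n
          by_contra h'
          push_neg at h'
          exact hnc ⟨n, fun a ha => ⟨a, fun hw => h' a ha hw, le_rfl⟩⟩
        obtain ⟨T, hT, hsub⟩ := exists_spec_up
          (W := {z : P | wedge p z ∧ ¬ ∃ q', starBelow q' q ∧ relPhi φ q' z}) hP.1 hbad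
        set ST : SpecT P := ⟨T, hT⟩ with hST
        have hSTbar : ST ∈ pSBar p := by
          intro x hx
          obtain ⟨z, hzW, hzx⟩ := hsub hx
          obtain ⟨w, hw1, hw2⟩ := hzW.1
          exact ⟨w, hw1, hw2.trans hzx⟩
        have hqφ : q ∈ (φ ST).1 := h ST hSTbar
        obtain ⟨q', hq'φ, hq'star⟩ := spec_dir hregQ (φ ST).2 {q}
          (by simp only [Finset.mem_singleton]; rintro f rfl; exact hqφ)
        have hq'q : starBelow q' q := hq'star q (Finset.mem_singleton_self q)
        obtain ⟨p', hp'T, hrel⟩ := exists_relPhi hregP hφ ST hq'φ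
        obtain ⟨z, hzW, hzp'⟩ := hsub hp'T
        exact hzW.2 ⟨q', hq'q, relPhi_mono hrel hzp'⟩
      exact ⟨_, hcap, fun c hc hw => hc hw⟩
    · -- relStar (starAboveComp (relPhi φ)) → relPhi
      rintro ⟨C, hC, hcomp⟩ S hS
      obtain ⟨c, hcS, hcC⟩ := S.2.1 C hC
      obtain ⟨q', hq'star, hrel⟩ := hcomp c hcC (hS hcS)
      have hS' : S ∈ pSBar c := fun x hx => spec_wedge S.2 hcS hx
      exact spec_up_star (φ S).2 (hrel S hS') hq'star
  · -- specMapOf (relPhi φ) φ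
    intro S
    ext r
    constructor
    · intro hr
      obtain ⟨qq, hqφ, hstar⟩ := spec_dir hregQ (φ S).2 {r}
        (by simp only [Finset.mem_singleton]; rintro f rfl; exact hr)
      obtain ⟨p, hp, hrel⟩ := exists_relPhi hregP hφ S hqφ
      exact ⟨p, hp, qq, hrel, hstar r (Finset.mem_singleton_self r)⟩
    · rintro ⟨p, hp, qq, hrel, hstar⟩
      have hSbar : S ∈ pSBar p := fun x hx => spec_wedge S.2 hp hx
      exact spec_up_star (φ S).2 (hrel S hSbar) hstar
  · -- uniqueness
    rintro R ⟨hRef, hWedge, hStar⟩ hSpec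
    have hRdown : ∀ (q : Q) (c c' : P), R q c → c' ≤ c → R q c' := by
      intro q c c' h hle
      obtain ⟨D, hD, hcomp⟩ := (hStar q c).mp h
      refine (hStar q c').mpr ⟨D, hD, fun d hd hw => ?_⟩
      obtain ⟨w, h1, h2⟩ := hw
      exact hcomp d hd ⟨w, h1.trans hle, h2⟩
    funext q p
    rw [eq_iff_iff]
    constructor
    · -- R q p → relPhi φ q p
      intro hRqp S hS
      obtain ⟨D, hD, hcomp⟩ := (hStar q p).mp hRqp
      obtain ⟨c, hcS, hcD⟩ := S.2.1 D hD
      obtain ⟨q', hq'star, hRq'c⟩ := hcomp c hcD (hS hcS)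
      show q ∈ (φ S).1
      rw [hSpec S]
      exact ⟨c, hcS, q', hRq'c, hq'star⟩
    · -- relPhi φ q p → R q p
      intro h
      apply (hStar q p).mpr
      have hcap : IsCap {c : P | wedge p c → ∃ q', starBelow q' q ∧ R q' c} := by
        by_contra hnc
        have hbad : ∀ n, ∃ z, z ∈ level P n ∧
            (wedge p z ∧ ¬ ∃ q', starBelow q' q ∧ R q' z) := by
          intro n
          by_contra h'
          push_neg at h'
          exact hnc ⟨n, fun a ha => ⟨a, fun hw => h' a ha hw, le_rfl⟩⟩
        obtain ⟨T, hT, hsub⟩ := exists_spec_up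
          (W := {z : P | wedge p z ∧ ¬ ∃ q', starBelow q' q ∧ R q' z}) hP.1 hbad
        set ST : SpecT P := ⟨T, hT⟩ with hST
        have hSTbar : ST ∈ pSBar p := by
          intro x hx
          obtain ⟨z, hzW, hzx⟩ := hsub hx
          obtain ⟨w, hw1, hw2⟩ := hzW.1
          exact ⟨w, hw1, hw2.trans hzx⟩
        have hqφ : q ∈ (φ ST).1 := h ST hSTbar
        rw [hSpec ST] at hqφ
        obtain ⟨p', hp', q'', hR'', hstar''⟩ := hqφ
        obtain ⟨z, hzW, hzp'⟩ := hsub hp'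
        exact hzW.2 ⟨q'', hstar'', hRdown q'' p' z hR'' hzp'⟩
      exact ⟨_, hcap, fun c hc hw => hc hw⟩
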